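/- Define a 4-tensor Ψ : (Fin n)⁴ → ℂ to be doubly mixed if there exist finitely many nonnegative reals r_k and positive semidefinite matrices ρ_k ∈ M_n(ℂ) with Ψ a b c d = ∑_k r_k * (ρ_k a b) * (ρ_k c d); define Ψ to be doubly dilated if there exist m, p and φ : Fin n → Fin m → Fin p → ℂ with Ψ a b c d = ∑_{i,j,k,l} φ a i k * conj (φ b i l) * φ c j l * conj (φ d j k). Theorem: every doubly mixed tensor is doubly dilated. -/

import Mathlib

open scoped ComplexOrder

def DoublyMixed (n : ℕ) (Ψ : Fin n → Fin n → Fin n → Fin n → ℂ) : Prop :=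
  ∃ (N : ℕ) (r : Fin N → ℝ) (ρ : Fin N → Matrix (Fin n) (Fin n) ℂ),
    (∀ k, 0 ≤ r k) ∧ (∀ k, (ρ k).PosSemidef) ∧
    ∀ a b c d, Ψ a b c d = ∑ k, (r k : ℂ) * ρ k a b * ρ k c d

def DoublyDilated (n : ℕ) (Ψ : Fin n → Fin n → Fin n → Fin n → ℂ) : Prop :=
  ∃ (m p : ℕ) (φ : Fin n → Fin m → Fin p → ℂ),
    ∀ a b c d, Ψ a b c d =
      ∑ i, ∑ j, ∑ k, ∑ l,
        φ a i k * (starRingEnd ℂ) (φ b i l) * φ c j l * (starRingEnd ℂ) (φ d j k)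

theorem doublyMixed_doublyDilated {n : ℕ} (Ψ : Fin n → Fin n → Fin n → Fin n → ℂ)
    (h : DoublyMixed n Ψ) : DoublyDilated n Ψ := by
  obtain ⟨N, r, ρ, hr, hpsd, hΨ⟩ := h
  choose B hB using fun k => (show ∃ B : Matrix (Fin n) (Fin n) ℂ, ρ k = B.conjTranspose * B by
    open scoped MatrixOrder Matrix.Norms.L2Operator in
    obtain ⟨B, hB⟩ := CStarAlgebra.nonneg_iff_eq_star_mul_self.mp (hpsd k).nonneg
    exact ⟨B, hB⟩)
  -- fourth root of `r k`, as a (real) complex number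
  set c : Fin N → ℂ := fun k => ((Real.sqrt (Real.sqrt (r k)) : ℝ) : ℂ) with hc
  have hcconj : ∀ k, (starRingEnd ℂ) (c k) = c k := fun k => Complex.conj_ofReal _
  have hc4 : ∀ k, c k * (starRingEnd ℂ) (c k) * (c k * (starRingEnd ℂ) (c k)) = (r k : ℂ) := by
    intro k
    rw [hcconj]
    have h1 : Real.sqrt (Real.sqrt (r k)) * Real.sqrt (Real.sqrt (r k)) = Real.sqrt (r k) :=
      Real.mul_self_sqrt (Real.sqrt_nonneg _)
    have h2 : Real.sqrt (r k) * Real.sqrt (r k) = r k := Real.mul_self_sqrt (hr k)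
    have h3 : (Real.sqrt (Real.sqrt (r k)) * Real.sqrt (Real.sqrt (r k)) *
        (Real.sqrt (Real.sqrt (r k)) * Real.sqrt (Real.sqrt (r k))) : ℝ) = r k := by
      rw [h1, h2]
    simp only [hc]
    exact_mod_cast h3
  -- the dilation family, indexed by `Fin n × Fin N` reindexed into `Fin (n * N)`
  set ψ : Fin n → (Fin n × Fin N) → Fin N → ℂ :=
    fun a ik k₂ => if ik.2 = k₂ then c ik.2 * (starRingEnd ℂ) (B ik.2 ik.1 a) else 0 with hψ
  refine ⟨n * N, N, fun a x => ψ a (finProdFinEquiv.symm x), fun a b c' d => ?_⟩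
  rw [hΨ]
  have key : (∑ i : Fin (n*N), ∑ j : Fin (n*N), ∑ k, ∑ l,
      ψ a (finProdFinEquiv.symm i) k * (starRingEnd ℂ) (ψ b (finProdFinEquiv.symm i) l) *
        ψ c' (finProdFinEquiv.symm j) l * (starRingEnd ℂ) (ψ d (finProdFinEquiv.symm j) k))
      = ∑ I : Fin n × Fin N, ∑ J : Fin n × Fin N, ∑ k, ∑ l,
      ψ a I k * (starRingEnd ℂ) (ψ b I l) * ψ c' J l * (starRingEnd ℂ) (ψ d J k) := by
    rw [← Equiv.sum_comp (finProdFinEquiv (m := n) (n := N))]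
    refine Finset.sum_congr rfl fun I _ => ?_
    rw [← Equiv.sum_comp (finProdFinEquiv (m := n) (n := N))]
    simp
  rw [key]
  have main : (∑ I : Fin n × Fin N, ∑ J : Fin n × Fin N, ∑ k, ∑ l,
      ψ a I k * (starRingEnd ℂ) (ψ b I l) * ψ c' J l * (starRingEnd ℂ) (ψ d J k))
      = ∑ k₁ : Fin N, ∑ i : Fin n, ∑ j : Fin n,
        (c k₁ * (starRingEnd ℂ) (c k₁) * (c k₁ * (starRingEnd ℂ) (c k₁))) *
          ((starRingEnd ℂ) (B k₁ i a) * B k₁ i b) *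
            ((starRingEnd ℂ) (B k₁ j c') * B k₁ j d) := by
    simp only [hψ]
    rw [Fintype.sum_prod_type, Finset.sum_comm]
    refine Finset.sum_congr rfl fun k₁ _ => ?_
    refine Finset.sum_congr rfl fun i _ => ?_
    rw [Fintype.sum_prod_type]
    simp only [apply_ite (starRingEnd ℂ), map_zero, map_mul, Complex.conj_conj,
      mul_ite, ite_mul, zero_mul, mul_zero, Finset.sum_ite_eq, Finset.sum_ite_eq',
      Finset.mem_univ, if_true, Finset.sum_ite_irrel, Finset.sum_const_zero]
    refine Finset.sum_congr rfl fun j _ => ?_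
    ring
  rw [main]
  refine Finset.sum_congr rfl fun k₁ _ => ?_
  have hρ : ∀ x y, ρ k₁ x y = ∑ i : Fin n, (starRingEnd ℂ) (B k₁ i x) * B k₁ i y := by
    intro x y
    rw [hB k₁]
    simp [Matrix.mul_apply, Matrix.conjTranspose_apply]
  rw [hρ, hρ, ← hc4 k₁, mul_assoc, Finset.sum_mul_sum, Finset.mul_sum]
  refine Finset.sum_congr rfl fun i _ => ?_
  rw [Finset.mul_sum]
  refine Finset.sum_congr rfl fun j _ => ?_
  ring
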